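/- Let p and q be distinct primes with p = 2 and k ≥ 2, i.e., n = q·2^k. Then n is not non-intersecting: there is no choice of residues a_d for each divisor d > 1 of n making {a_d mod d : d | n, d > 1} a CD congruence set. -/
import Mathlib


/-- Let `q` be an odd prime (i.e. a prime distinct from `2`) and `k ≥ 2`. Then
`n = q * 2^k` is not non-intersecting: there is no choice of residues `a d` for the
divisors `d > 1` of `n` making `{a d mod d : d ∣ n, d > 1}` a CD congruence set. -/
theorem q_mul_two_pow_not_nonintersecting (q : ℕ) (hq : q.Prime) (hq2 : q ≠ 2)
    (k : ℕ) (hk : 2 ≤ k) :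
    ¬ ∃ a : ℕ → ℤ, ∀ d d' : ℕ, d ∣ q * 2 ^ k → d' ∣ q * 2 ^ k → 1 < d → 1 < d' → d ≠ d' →
      (∃ x : ℤ, x ≡ a d [ZMOD (d : ℤ)] ∧ x ≡ a d' [ZMOD (d' : ℤ)]) →
      Nat.gcd d d' = 1 := by
  rintro ⟨a, hCD⟩
  have hq3 : 3 ≤ q := by have := hq.two_le; omega
  have hqodd : Odd q := hq.odd_of_ne_two hq2
  obtain ⟨s, hs⟩ : ∃ s : ℕ, q + 1 = 2 * s := by
    obtain ⟨m, hm⟩ := hqodd; exact ⟨m + 1, by omega⟩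
  -- divisibility facts
  have h2k : (2 : ℕ) ∣ 2 ^ k := dvd_pow_self 2 (by omega)
  have hd2 : (2 : ℕ) ∣ q * 2 ^ k := h2k.trans (dvd_mul_left _ _)
  have hd4 : (4 : ℕ) ∣ q * 2 ^ k := by
    have : (4 : ℕ) ∣ 2 ^ k := by
      have := pow_dvd_pow 2 hk; norm_num at this; exact this
    exact this.trans (dvd_mul_left _ _)
  have hd2q : (2 * q : ℕ) ∣ q * 2 ^ k := by
    rw [mul_comm 2 q]; exact mul_dvd_mul_left q h2k
  have h1_2q : (1 : ℕ) < 2 * q := by omega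
  -- gcd facts
  have hg24 : Nat.gcd 2 4 ≠ 1 := by norm_num
  have hg22q : Nat.gcd 2 (2 * q) ≠ 1 := by
    have : (2 : ℕ) ∣ Nat.gcd 2 (2 * q) := Nat.dvd_gcd dvd_rfl ⟨q, rfl⟩
    omega
  have hg42q : Nat.gcd 4 (2 * q) ≠ 1 := by
    have : (2 : ℕ) ∣ Nat.gcd 4 (2 * q) := Nat.dvd_gcd (by norm_num) ⟨q, rfl⟩
    omega
  -- a 2 ≢ a 4 mod 2
  have h24 : ¬ (a 2 ≡ a 4 [ZMOD (2 : ℤ)]) := by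
    intro h
    exact hg24 (hCD 2 4 hd2 hd4 (by norm_num) (by norm_num) (by norm_num)
      ⟨a 4, by exact_mod_cast h.symm, Int.ModEq.refl _⟩)
  -- a 2 ≢ a (2q) mod 2
  have h22q : ¬ (a 2 ≡ a (2 * q) [ZMOD (2 : ℤ)]) := by
    intro h
    exact hg22q (hCD 2 (2 * q) hd2 hd2q (by norm_num) h1_2q (by omega)
      ⟨a (2 * q), by exact_mod_cast h.symm, Int.ModEq.refl _⟩)
  -- hence a 4 ≡ a (2q) mod 2
  have h42q : a 4 ≡ a (2 * q) [ZMOD (2 : ℤ)] := by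
    unfold Int.ModEq at h24 h22q ⊢
    have e2 := Int.emod_two_eq (a 2)
    have e4 := Int.emod_two_eq (a 4)
    have e2q := Int.emod_two_eq (a (2 * q))
    omega
  obtain ⟨t, ht⟩ : ∃ t : ℤ, a (2 * q) - a 4 = 2 * t := by
    have := Int.ModEq.dvd h42q
    obtain ⟨t, ht⟩ := this; exact ⟨t, ht⟩
  -- overlap witness for 4 and 2q
  refine hg42q (hCD 4 (2 * q) hd4 hd2q (by norm_num) h1_2q (by omega)
    ⟨a 4 + 2 * t * (q + 1), ?_, ?_⟩)
  · have : ((4 : ℕ) : ℤ) ∣ (a 4 - (a 4 + 2 * t * (q + 1))) := by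
      push_cast
      refine ⟨-(t * s), ?_⟩
      have : ((q : ℤ) + 1) = 2 * s := by exact_mod_cast congrArg (Nat.cast : ℕ → ℤ) hs
      rw [this]; ring
    exact Int.modEq_iff_dvd.mpr this
  · have : (((2 * q : ℕ)) : ℤ) ∣ (a (2 * q) - (a 4 + 2 * t * (q + 1))) := by
      push_cast
      exact ⟨-t, by linear_combination ht⟩
    exact Int.modEq_iff_dvd.mpr this
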